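/- Let ψ : ℝ^{d₁} × ℝ^{d₂} → ℝ^m be continuous with ψ(s x, t y) = s^a t^b ψ(x,y) for s,t ≥ 0 and a, b > 0, and let μ be a Radon measure on ℝ^{d₁}\{0} that is homogeneous of index −α (μ(tA) = t^{−α} μ(A) for t > 0). For fixed y ∈ ℝ^{d₂} and any continuous f ≥ 0 with compact support in ℝ^m \ {0}, the function g(y) = ∫ f(ψ(x, y)) μ(dx) is finite and satisfies the homogeneity g(r·y) = r^{α b / a} g(y) for all r > 0. -/

import Mathlib

open MeasureTheory Filter Topology Pointwise

/-- For a continuous `(a,b)`-bihomogeneous `ψ`, a Radon measure `μ` on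
`ℝ^{d₁}∖{0}` homogeneous of index `−α`, and `f ≥ 0` continuous with compact
support in an annulus of `ℝ^m∖{0}`, the function
`g(y) = ∫ f(ψ(x,y)) μ(dx)` is finite (the integrand is `μ`-integrable) and
satisfies `g(r·y) = r^{αb/a} g(y)` for all `r > 0`. -/
theorem stmt6 {d₁ d₂ m : ℕ}
    (ψ : EuclideanSpace ℝ (Fin d₁) × EuclideanSpace ℝ (Fin d₂) → EuclideanSpace ℝ (Fin m))
    (hψ : Continuous ψ)
    (a b α : ℝ) (ha : 0 < a) (hb : 0 < b) (hα : 0 < α)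
    (hhom : ∀ s t : ℝ, 0 ≤ s → 0 ≤ t →
      ∀ (x : EuclideanSpace ℝ (Fin d₁)) (y : EuclideanSpace ℝ (Fin d₂)),
        ψ (s • x, t • y) = (s ^ a * t ^ b) • ψ (x, y))
    (μ : Measure (EuclideanSpace ℝ (Fin d₁)))
    (hzero : μ {0} = 0)
    (hRadon : ∀ r : ℝ, 0 < r → μ {x | r ≤ ‖x‖} ≠ ⊤)
    (hμhom : ∀ t : ℝ, 0 < t → ∀ A : Set (EuclideanSpace ℝ (Fin d₁)), MeasurableSet A →
      μ (t • A) = ENNReal.ofReal (t ^ (-α)) * μ A)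
    (f : EuclideanSpace ℝ (Fin m) → ℝ) (hf : Continuous f) (hfnn : ∀ z, 0 ≤ f z)
    (c : ℝ) (hc : 0 < c) (hsupp : ∀ z, f z ≠ 0 → c⁻¹ ≤ ‖z‖ ∧ ‖z‖ ≤ c)
    (y : EuclideanSpace ℝ (Fin d₂)) :
    Integrable (fun x => f (ψ (x, y))) μ ∧
    ∀ r : ℝ, 0 < r →
      ∫ x, f (ψ (x, r • y)) ∂μ = r ^ (α * b / a) * ∫ x, f (ψ (x, y)) ∂μ := by
  -- bound for ψ(·, y) on the unit sphere
  obtain ⟨C, hC⟩ := (isCompact_sphere (0 : EuclideanSpace ℝ (Fin d₁)) 1).exists_bound_of_continuousOn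
    (f := fun x => ψ (x, y)) (hψ.comp (continuous_id.prodMk continuous_const)).continuousOn
  set Cmax : ℝ := max C 1 with hCmaxdef
  have hCmaxpos : 0 < Cmax := lt_of_lt_of_le one_pos (le_max_right _ _)
  -- pointwise bound ‖ψ(x,y)‖ ≤ ‖x‖^a * Cmax
  have hbound : ∀ x : EuclideanSpace ℝ (Fin d₁), ‖ψ (x, y)‖ ≤ ‖x‖ ^ a * Cmax := by
    intro x
    rcases eq_or_ne x 0 with rfl | hx
    · have h0 : ψ ((0 : ℝ) • (0 : EuclideanSpace ℝ (Fin d₁)), (1 : ℝ) • y)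
          = ((0 : ℝ) ^ a * (1 : ℝ) ^ b) • ψ (0, y) := hhom 0 1 le_rfl zero_le_one 0 y
      simp only [smul_zero, one_smul, Real.rpow_natCast] at h0
      rw [Real.zero_rpow ha.ne'] at h0
      simp only [zero_mul, zero_smul] at h0
      rw [h0]
      simp only [norm_zero]
      positivity
    · have hxn : (0 : ℝ) < ‖x‖ := norm_pos_iff.mpr hx
      set u : EuclideanSpace ℝ (Fin d₁) := ‖x‖⁻¹ • x with hu
      have hus : u ∈ Metric.sphere (0 : EuclideanSpace ℝ (Fin d₁)) 1 := by
        simp [hu, norm_smul, abs_of_pos (inv_pos.mpr hxn), inv_mul_cancel₀ hxn.ne']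
      have hxu : x = ‖x‖ • u := by
        rw [hu, smul_smul, mul_inv_cancel₀ hxn.ne', one_smul]
      have h1 : ψ (x, y) = (‖x‖ ^ a) • ψ (u, y) := by
        conv_lhs => rw [hxu, ← one_smul ℝ y]
        rw [hhom ‖x‖ 1 hxn.le zero_le_one u y, Real.one_rpow, mul_one]
      rw [h1, norm_smul, Real.norm_eq_abs, abs_of_nonneg (Real.rpow_nonneg hxn.le a)]
      have : ‖ψ (u, y)‖ ≤ Cmax := le_trans (hC u hus) (le_max_left _ _)
      exact mul_le_mul_of_nonneg_left this (Real.rpow_nonneg hxn.le a)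
  -- support of x ↦ f(ψ(x,y)) is bounded away from 0
  set r₀ : ℝ := (c⁻¹ / Cmax) ^ (1 / a) with hr₀def
  have hεpos : (0 : ℝ) < c⁻¹ / Cmax := div_pos (inv_pos.mpr hc) hCmaxpos
  have hr₀pos : 0 < r₀ := Real.rpow_pos_of_pos hεpos _
  have hsuppx : ∀ x : EuclideanSpace ℝ (Fin d₁), f (ψ (x, y)) ≠ 0 → r₀ ≤ ‖x‖ := by
    intro x hx
    have h1 : c⁻¹ ≤ ‖ψ (x, y)‖ := (hsupp _ hx).1
    have h2 : c⁻¹ ≤ ‖x‖ ^ a * Cmax := le_trans h1 (hbound x)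
    have h3 : c⁻¹ / Cmax ≤ ‖x‖ ^ a := (div_le_iff₀ hCmaxpos).mpr h2
    calc r₀ ≤ (‖x‖ ^ a) ^ (1 / a) :=
          Real.rpow_le_rpow hεpos.le h3 (by positivity)
      _ = ‖x‖ := by
          rw [← Real.rpow_mul (norm_nonneg x), mul_one_div_cancel ha.ne', Real.rpow_one]
  -- bound for f
  obtain ⟨Cf, hCf⟩ := (isCompact_closedBall (0 : EuclideanSpace ℝ (Fin m)) c).exists_bound_of_continuousOn
    hf.continuousOn
  have hfbdd : ∀ z, ‖f z‖ ≤ max Cf 0 := by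
    intro z
    rcases eq_or_ne (f z) 0 with h | h
    · simp [h, le_max_right]
    · exact le_trans (hCf z (by simpa [Metric.mem_closedBall, dist_zero_right] using (hsupp z h).2))
        (le_max_left _ _)
  -- the set where the integrand lives
  set S : Set (EuclideanSpace ℝ (Fin d₁)) := {x | r₀ ≤ ‖x‖} with hSdef
  have hSmeas : MeasurableSet S := (isClosed_le continuous_const continuous_norm).measurableSet
  have hSfin : μ S < ⊤ := lt_top_iff_ne_top.mpr (hRadon r₀ hr₀pos)
  -- integrability of x ↦ f(ψ(x, y')) for ANY y' (with its own r₀; we prove it generally)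
  have hint : ∀ y' : EuclideanSpace ℝ (Fin d₂), Integrable (fun x => f (ψ (x, y'))) μ := by
    intro y'
    -- redo the support bound for y'
    obtain ⟨C', hC'⟩ := (isCompact_sphere (0 : EuclideanSpace ℝ (Fin d₁)) 1).exists_bound_of_continuousOn
      (f := fun x => ψ (x, y')) (hψ.comp (continuous_id.prodMk continuous_const)).continuousOn
    set Cmax' : ℝ := max C' 1 with hCmax'def
    have hCmax'pos : (0 : ℝ) < Cmax' := lt_of_lt_of_le one_pos (le_max_right _ _)
    have hbound' : ∀ x : EuclideanSpace ℝ (Fin d₁), ‖ψ (x, y')‖ ≤ ‖x‖ ^ a * Cmax' := by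
      intro x
      rcases eq_or_ne x 0 with rfl | hx
      · have h0 : ψ ((0 : ℝ) • (0 : EuclideanSpace ℝ (Fin d₁)), (1 : ℝ) • y')
            = ((0 : ℝ) ^ a * (1 : ℝ) ^ b) • ψ (0, y') := hhom 0 1 le_rfl zero_le_one 0 y'
        simp only [smul_zero, one_smul] at h0
        rw [Real.zero_rpow ha.ne'] at h0
        simp only [zero_mul, zero_smul] at h0
        rw [h0]; simp only [norm_zero]; positivity
      · have hxn : (0 : ℝ) < ‖x‖ := norm_pos_iff.mpr hx
        set u : EuclideanSpace ℝ (Fin d₁) := ‖x‖⁻¹ • x with hu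
        have hus : u ∈ Metric.sphere (0 : EuclideanSpace ℝ (Fin d₁)) 1 := by
          simp [hu, norm_smul, abs_of_pos (inv_pos.mpr hxn), inv_mul_cancel₀ hxn.ne']
        have hxu : x = ‖x‖ • u := by
          rw [hu, smul_smul, mul_inv_cancel₀ hxn.ne', one_smul]
        have h1 : ψ (x, y') = (‖x‖ ^ a) • ψ (u, y') := by
          conv_lhs => rw [hxu, ← one_smul ℝ y']
          rw [hhom ‖x‖ 1 hxn.le zero_le_one u y', Real.one_rpow, mul_one]
        rw [h1, norm_smul, Real.norm_eq_abs, abs_of_nonneg (Real.rpow_nonneg hxn.le a)]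
        exact mul_le_mul_of_nonneg_left (le_trans (hC' u hus) (le_max_left _ _))
          (Real.rpow_nonneg hxn.le a)
    set r₁ : ℝ := (c⁻¹ / Cmax') ^ (1 / a) with hr₁def
    have hε' : (0 : ℝ) < c⁻¹ / Cmax' := div_pos (inv_pos.mpr hc) hCmax'pos
    have hr₁pos : 0 < r₁ := Real.rpow_pos_of_pos hε' _
    have hsuppx' : ∀ x : EuclideanSpace ℝ (Fin d₁), f (ψ (x, y')) ≠ 0 → r₁ ≤ ‖x‖ := by
      intro x hx
      have h2 : c⁻¹ ≤ ‖x‖ ^ a * Cmax' := le_trans (hsupp _ hx).1 (hbound' x)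
      have h3 : c⁻¹ / Cmax' ≤ ‖x‖ ^ a := (div_le_iff₀ hCmax'pos).mpr h2
      calc r₁ ≤ (‖x‖ ^ a) ^ (1 / a) := Real.rpow_le_rpow hε'.le h3 (by positivity)
        _ = ‖x‖ := by
            rw [← Real.rpow_mul (norm_nonneg x), mul_one_div_cancel ha.ne', Real.rpow_one]
    set S' : Set (EuclideanSpace ℝ (Fin d₁)) := {x | r₁ ≤ ‖x‖} with hS'def
    have hS'meas : MeasurableSet S' := (isClosed_le continuous_const continuous_norm).measurableSet
    have hS'fin : μ S' < ⊤ := lt_top_iff_ne_top.mpr (hRadon r₁ hr₁pos)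
    have hdom : Integrable (S'.indicator fun _ => max Cf 0) μ := by
      rw [integrable_indicator_iff hS'meas]
      exact (integrableOn_const_iff).mpr (Or.inr hS'fin)
    refine hdom.mono' ((hf.comp (hψ.comp (continuous_id.prodMk continuous_const))).aestronglyMeasurable)
      (Filter.Eventually.of_forall fun x => ?_)
    rcases eq_or_ne (f (ψ (x, y'))) 0 with h | h
    · rw [h, norm_zero]
      exact Set.indicator_nonneg (fun _ _ => le_max_right _ _) x
    · rw [Set.indicator_of_mem (show x ∈ S' from hsuppx' x h)]
      exact hfbdd _
  refine ⟨hint y, fun r hr => ?_⟩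
  -- homogeneity
  set t : ℝ := r ^ (b / a) with htdef
  have htpos : 0 < t := Real.rpow_pos_of_pos hr _
  have hta : t ^ a = r ^ b := by
    rw [htdef, ← Real.rpow_mul hr.le, div_mul_cancel₀ _ ha.ne']
  have htα : t ^ α = r ^ (α * b / a) := by
    rw [htdef, ← Real.rpow_mul hr.le]
    ring_nf
  -- pointwise identity ψ(x, r•y) = ψ(t•x, y)
  have hpt : ∀ x : EuclideanSpace ℝ (Fin d₁), ψ (x, r • y) = ψ (t • x, y) := by
    intro x
    have h1 : ψ ((1 : ℝ) • x, r • y) = ((1 : ℝ) ^ a * r ^ b) • ψ (x, y) :=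
      hhom 1 r zero_le_one hr.le x y
    have h2 : ψ (t • x, (1 : ℝ) • y) = (t ^ a * (1 : ℝ) ^ b) • ψ (x, y) :=
      hhom t 1 htpos.le zero_le_one x y
    simp only [one_smul, Real.one_rpow, one_mul, mul_one] at h1 h2
    rw [h1, h2, hta]
  -- pushforward of μ under x ↦ t • x
  have hmap : Measure.map (fun x : EuclideanSpace ℝ (Fin d₁) => t • x) μ
      = ENNReal.ofReal (t ^ α) • μ := by
    ext A hA
    rw [Measure.map_apply (measurable_const_smul t) hA, Measure.smul_apply, smul_eq_mul]
    have hpre : (fun x : EuclideanSpace ℝ (Fin d₁) => t • x) ⁻¹' A = t⁻¹ • A := by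
      ext x
      rw [Set.mem_preimage, Set.mem_smul_set_iff_inv_smul_mem₀ (inv_ne_zero htpos.ne'), inv_inv]
    rw [hpre, hμhom t⁻¹ (inv_pos.mpr htpos) A hA]
    congr 1
    rw [Real.inv_rpow htpos.le, Real.rpow_neg htpos.le, inv_inv]
  -- change of variables
  have hcv : ∫ x, f (ψ (x, r • y)) ∂μ = ∫ x, f (ψ (t • x, y)) ∂μ := by
    exact integral_congr_ae (Filter.Eventually.of_forall fun x => congrArg f (hpt x))
  rw [hcv]
  have hmeas : AEStronglyMeasurable (fun x => f (ψ (x, y)))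
      (Measure.map (fun x : EuclideanSpace ℝ (Fin d₁) => t • x) μ) :=
    (hf.comp (hψ.comp (continuous_id.prodMk continuous_const))).aestronglyMeasurable
  calc ∫ x, f (ψ (t • x, y)) ∂μ
      = ∫ x, f (ψ (x, y)) ∂(Measure.map (fun x => t • x) μ) :=
        (integral_map (measurable_const_smul t).aemeasurable hmeas).symm
    _ = (ENNReal.ofReal (t ^ α)).toReal * ∫ x, f (ψ (x, y)) ∂μ := by
        rw [hmap, integral_smul_measure, smul_eq_mul]
    _ = r ^ (α * b / a) * ∫ x, f (ψ (x, y)) ∂μ := by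
        rw [ENNReal.toReal_ofReal (Real.rpow_nonneg htpos.le α), htα]
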